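/- Let A be a unital C*-algebra with a conditional expectation E : A → P of index-finite type with scalar index (Index E = c·1 with c ≥ 1), and suppose e is a projection in A with E(e) ≥ c^{-2} e. Setting g = c·E(e) and assuming g is a projection, one has g ≥ c^{-1} e, and consequently (1−g) e (1−g) = 0, hence ge = eg = e and ege = e. -/

import Mathlib

lemma aux_real_smul_nonneg {A : Type*} [CStarAlgebra A] [PartialOrder A]
    [StarOrderedRing A] {r : ℝ} (hr : 0 ≤ r) {x : A} (hx : 0 ≤ x) :
    0 ≤ (r : ℂ) • x := by
  have hb : x = star (CFC.sqrt x) * CFC.sqrt x := by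
    rw [(IsSelfAdjoint.of_nonneg (CFC.sqrt_nonneg x)).star_eq, CFC.sqrt_mul_sqrt_self x hx]
  set b := CFC.sqrt x
  have key : (r : ℂ) • x = star ((Real.sqrt r : ℂ) • b) * ((Real.sqrt r : ℂ) • b) := by
    rw [star_smul, smul_mul_smul_comm, ← hb, Complex.star_def, Complex.conj_ofReal,
      ← Complex.ofReal_mul, Real.mul_self_sqrt hr]
  rw [key]
  exact star_mul_self_nonneg _

lemma aux_real_smul_le {A : Type*} [CStarAlgebra A] [PartialOrder A]
    [StarOrderedRing A] {r : ℝ} (hr : 0 ≤ r) {x y : A} (hxy : x ≤ y) :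
    (r : ℂ) • x ≤ (r : ℂ) • y := by
  have := aux_real_smul_nonneg hr (sub_nonneg.mpr hxy)
  rwa [smul_sub, sub_nonneg] at this

/-- let `E : A → P` be a conditional expectation of index-finite type with
scalar index `Index E = c · 1` (`c ≥ 1`), and let `e` be a projection with
`E(e) ≥ c⁻² e`.  If `g := c • E(e)` is a projection, then `g ≥ c⁻¹ e`, hence
`(1−g) e (1−g) = 0`, and therefore `g e = e = e g` and `e g e = e`. -/
theorem rokhlin_projection_dominates
    {A : Type*} [CStarAlgebra A] [PartialOrder A] [StarOrderedRing A]
    (P : StarSubalgebra ℂ A)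
    (E : A →ₗ[ℂ] A)
    (hE_mem : ∀ x : A, E x ∈ P)
    (hE_proj : ∀ x ∈ P, E x = x)
    (hE_pos : ∀ x : A, 0 ≤ x → 0 ≤ E x)
    -- scalar index `c ≥ 1`:
    (c : ℝ) (hc : 1 ≤ c)
    -- `e` is a projection with `E(e) ≥ c⁻² e` (Watatani's inequality):
    (e : A) (he : IsIdempotentElem e) (hesa : IsSelfAdjoint e)
    (hEe : ((c : ℂ) ^ 2)⁻¹ • e ≤ E e)
    -- `g = c • E(e)` is a projection:
    (g : A) (hg : g = (c : ℂ) • E e)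
    (hgproj : IsIdempotentElem g) (hgsa : IsSelfAdjoint g) :
    (c : ℂ)⁻¹ • e ≤ g ∧
    (1 - g) * e * (1 - g) = 0 ∧
    g * e = e ∧ e * g = e ∧ e * g * e = e := by
  have hc0 : (0 : ℝ) < c := lt_of_lt_of_le one_pos hc
  have hcC : (c : ℂ) ≠ 0 := by exact_mod_cast hc0.ne'
  -- e is nonneg
  have he_nonneg : 0 ≤ e := by
    have : e = star e * e := by rw [hesa.star_eq, he]
    rw [this]; exact star_mul_self_nonneg e
  -- Step 1: c⁻¹ • e ≤ g
  have step1 : (c : ℂ)⁻¹ • e ≤ g := by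
    have h := aux_real_smul_le (le_of_lt hc0) hEe
    rw [smul_smul] at h
    have heq : (c : ℂ) * ((c : ℂ) ^ 2)⁻¹ = (c : ℂ)⁻¹ := by
      field_simp
    rwa [heq, ← hg] at h
  refine ⟨step1, ?_⟩
  -- Step 2: (1-g) e (1-g) = 0
  have h1gsa : IsSelfAdjoint (1 - g) := by
    rw [IsSelfAdjoint, star_sub, star_one, hgsa.star_eq]
  have hconj : (1 - g) * ((c : ℂ)⁻¹ • e) * (1 - g) ≤ (1 - g) * g * (1 - g) :=
    h1gsa.conjugate_le_conjugate step1
  have hgg : (1 - g) * g * (1 - g) = 0 := by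
    rw [sub_mul, one_mul, hgproj.eq, sub_self, zero_mul]
  have hX_nonneg : 0 ≤ (1 - g) * ((c : ℂ)⁻¹ • e) * (1 - g) := by
    have hce : (0:A) ≤ (c : ℂ)⁻¹ • e := by
      have : ((c : ℂ))⁻¹ = ((c⁻¹ : ℝ) : ℂ) := by push_cast; ring
      rw [this]
      exact aux_real_smul_nonneg (inv_nonneg.mpr hc0.le) he_nonneg
    calc (0:A) = (1 - g) * 0 * (1 - g) := by simp
    _ ≤ (1 - g) * ((c : ℂ)⁻¹ • e) * (1 - g) := h1gsa.conjugate_le_conjugate hce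
  have hX0 : (1 - g) * ((c : ℂ)⁻¹ • e) * (1 - g) = 0 :=
    le_antisymm (hgg ▸ hconj) hX_nonneg
  have step2 : (1 - g) * e * (1 - g) = 0 := by
    have : (c : ℂ)⁻¹ • ((1 - g) * e * (1 - g)) = 0 := by
      rw [← hX0]; rw [mul_smul_comm, smul_mul_assoc]
    rcases smul_eq_zero.mp this with h | h
    · exact absurd h (inv_ne_zero hcC)
    · exact h
  refine ⟨step2, ?_⟩
  -- Step 3: e(1-g) = 0
  have heg : e * (1 - g) = 0 := by
    have hx : star (e * (1 - g)) * (e * (1 - g)) = 0 := by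
      rw [star_mul, hesa.star_eq, h1gsa.star_eq]
      rw [← mul_assoc, mul_assoc (1 - g) e e, he.eq]
      exact step2
    exact (CStarRing.star_mul_self_eq_zero_iff _).mp hx
  have heg' : e * g = e := by
    have := heg
    rw [mul_sub, mul_one, sub_eq_zero] at this
    exact this.symm
  have hge : g * e = e := by
    have := congrArg star heg'
    rwa [star_mul, hesa.star_eq, hgsa.star_eq] at this
  exact ⟨hge, heg', by rw [heg', he]⟩
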